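/- A graph G is a generalized spider with body of size n ≥ 3 if and only if G is isomorphic to the line graph of some spider. -/

import Mathlib

/-- The base relation for a generalized spider: body vertices are pairwise adjacent, the first
vertex of the leg at body vertex `i` is adjacent to `i`, and consecutive leg vertices are
adjacent. -/
def spiderRel (n : ℕ) (m : Fin n → ℕ) :
    (Fin n ⊕ Σ i : Fin n, Fin (m i)) → (Fin n ⊕ Σ i : Fin n, Fin (m i)) → Prop
  | Sum.inl _, Sum.inl _ => True
  | Sum.inl i, Sum.inr ⟨j, k⟩ => i = j ∧ (k : ℕ) = 0
  | Sum.inr ⟨i, k⟩, Sum.inr ⟨j, l⟩ => i = j ∧ (k : ℕ) + 1 = (l : ℕ)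
  | _, _ => False

/-- The generalized spider with body `K n` and a (possibly empty) path of length `m i` attached
at each body vertex `i`; each body vertex has degree at most `n`. -/
def genSpider (n : ℕ) (m : Fin n → ℕ) : SimpleGraph (Fin n ⊕ Σ i : Fin n, Fin (m i)) :=
  SimpleGraph.fromRel (spiderRel n m)

/-- A graph is a generalized spider with body of size `n` if it is isomorphic to some
`genSpider n m`. -/
def IsGenSpider {V : Type} (G : SimpleGraph V) (n : ℕ) : Prop :=
  ∃ m : Fin n → ℕ, Nonempty (G ≃g genSpider n m)

/-- A spider is a tree with exactly one vertex of degree at least `3`. -/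
def IsSpider {W : Type} (S : SimpleGraph W) : Prop :=
  S.IsTree ∧ ∃! v : W, 3 ≤ (S.neighborSet v).ncard


open SimpleGraph

namespace SpiderAux

variable {V : Type*} {W : Type*}

/-- A graph with a rank function where edges change rank by one and parents are unique
is acyclic. -/
lemma isAcyclic_of_rank (G : SimpleGraph V) (h : V → ℕ)
    (h1 : ∀ ⦃u v⦄, G.Adj u v → h u + 1 = h v ∨ h v + 1 = h u)
    (h2 : ∀ ⦃v u u'⦄, G.Adj u v → G.Adj u' v → h u + 1 = h v → h u' + 1 = h v → u = u') :
    G.IsAcyclic := by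
  classical
  intro x c hc
  have hmax : ∃ u ∈ c.support, ∀ y ∈ c.support, h y ≤ h u := by
    obtain ⟨u, hu, hmax⟩ := Finset.exists_max_image c.support.toFinset h
      ⟨x, by simp [Walk.start_mem_support]⟩
    exact ⟨u, by simpa using hu, fun y hy => hmax y (by simpa using hy)⟩
  obtain ⟨u, hu, hmax⟩ := hmax
  set c' := c.rotate u hu with hc'def
  have hc' : c'.IsCycle := hc.rotate hu
  have hmax' : ∀ y ∈ c'.support, h y ≤ h u := by
    intro y hy
    have hrot := Walk.support_rotate c u hu
    rcases List.mem_cons.mp (Walk.support_eq_cons c' ▸ hy : y ∈ u :: c'.support.tail)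
        with h' | h'
    · exact h' ▸ hmax u hu
    · exact hmax y (List.mem_of_mem_tail (hrot.mem_iff.mp h'))
  have hlen : 3 ≤ c'.length := hc'.three_le_length
  -- decompose c' = cons hadj q
  cases hq : c' with
  | nil => rw [hq] at hlen; simp at hlen
  | @cons _ a _ hadj q =>
    -- decompose q from the end
    cases hq2 : q with
    | nil =>
      rw [hq, hq2] at hlen; simp at hlen
    | @cons _ a2 _ hadj2 q2 =>
      obtain ⟨b, r, hbu, hqeq⟩ := Walk.exists_cons_eq_concat hadj2 q2
      rw [← hq2] at hqeq
      -- a and b are both "parents" of u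
      have ha_mem : a ∈ c'.support := by
        rw [hq]; simp [Walk.support_cons, Walk.start_mem_support]
      have hb_mem : b ∈ c'.support := by
        rw [hq, hqeq]
        simp [Walk.support_cons, Walk.support_concat]
      have hau : G.Adj a u := hadj.symm
      have hbu' : G.Adj b u := hbu
      have ha_rank : h a + 1 = h u := by
        rcases h1 hau with hh | hh
        · exact hh
        · have := hmax' a ha_mem
          have hne : a ≠ u := hadj.ne.symm
          -- h u + 1 = h a together with h a ≤ h u is a contradiction
          omega
      have hb_rank : h b + 1 = h u := by
        rcases h1 hbu' with hh | hh
        · exact hh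
        · have := hmax' b hb_mem
          omega
      have hab : a = b := h2 hau hbu' ha_rank hb_rank
      -- now the edge s(u,a) appears twice in c'.edges
      have htrail : c'.edges.Nodup := hc'.isTrail.edges_nodup
      rw [hq, Walk.edges_cons] at htrail
      have hmem : s(u, a) ∈ q.edges := by
        rw [hqeq, Walk.edges_concat]
        subst hab
        simp [Sym2.eq_swap]
      exact (List.nodup_cons.mp htrail).1 hmem



/-- Vertex type of the canonical spider. -/
abbrev CSV (n : ℕ) (m : Fin n → ℕ) : Type := Option (Σ i : Fin n, Fin (m i + 1))

def cRel (n : ℕ) (m : Fin n → ℕ) : CSV n m → CSV n m → Prop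
  | none, some ⟨_, k⟩ => (k : ℕ) = 0
  | some ⟨i, k⟩, some ⟨j, l⟩ => i = j ∧ (k : ℕ) + 1 = (l : ℕ)
  | _, _ => False

/-- The canonical spider: a star with `n` legs, leg `i` being a path with `m i + 1` edges. -/
def cSpider (n : ℕ) (m : Fin n → ℕ) : SimpleGraph (CSV n m) :=
  SimpleGraph.fromRel (cRel n m)

variable {n : ℕ} {m : Fin n → ℕ}

lemma cSpider_adj_none_some {i : Fin n} {k : Fin (m i + 1)} :
    (cSpider n m).Adj none (some ⟨i, k⟩) ↔ (k : ℕ) = 0 := by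
  simp only [cSpider, fromRel_adj]
  constructor
  · rintro ⟨-, h | h⟩
    · exact h
    · exact h.elim
  · intro h
    exact ⟨by simp, Or.inl h⟩

lemma cSpider_adj_some_some {i j : Fin n} {k : Fin (m i + 1)} {l : Fin (m j + 1)} :
    (cSpider n m).Adj (some ⟨i, k⟩) (some ⟨j, l⟩) ↔
      i = j ∧ ((k : ℕ) + 1 = (l : ℕ) ∨ (l : ℕ) + 1 = (k : ℕ)) := by
  simp only [cSpider, fromRel_adj]
  constructor
  · rintro ⟨-, ⟨hij, h⟩ | ⟨hij, h⟩⟩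
    · exact ⟨hij, Or.inl h⟩
    · exact ⟨hij.symm, Or.inr h⟩
  · rintro ⟨rfl, h | h⟩
    · refine ⟨?_, Or.inl ⟨rfl, h⟩⟩
      simp only [ne_eq, Option.some.injEq, Sigma.mk.inj_iff, heq_eq_eq, true_and]
      intro hkl
      rw [hkl] at h; omega
    · refine ⟨?_, Or.inr ⟨rfl, h⟩⟩
      simp only [ne_eq, Option.some.injEq, Sigma.mk.inj_iff, heq_eq_eq, true_and]
      intro hkl
      rw [hkl] at h; omega

lemma cSpider_adj_none_none : ¬ (cSpider n m).Adj none none := fun h => h.ne rfl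

lemma cSpider_adj_some_none {i : Fin n} {k : Fin (m i + 1)} :
    (cSpider n m).Adj (some ⟨i, k⟩) none ↔ (k : ℕ) = 0 := by
  rw [adj_comm]; exact cSpider_adj_none_some

/-- rank function on the canonical spider -/
def cRank : CSV n m → ℕ
  | none => 0
  | some ⟨_, k⟩ => (k : ℕ) + 1

/-- neighbors of a non-center vertex with equal rank are equal -/
lemma cSpider_adj_rank_eq {i : Fin n} {k : Fin (m i + 1)} {w w' : CSV n m}
    (hw : (cSpider n m).Adj w (some ⟨i, k⟩)) (hw' : (cSpider n m).Adj w' (some ⟨i, k⟩))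
    (hr : cRank w = cRank w') : w = w' := by
  rcases w with _ | ⟨j, l⟩ <;> rcases w' with _ | ⟨j', l'⟩
  · rfl
  · simp [cRank] at hr
  · simp [cRank] at hr
  · obtain ⟨rfl, -⟩ := cSpider_adj_some_some.mp hw
    obtain ⟨rfl, -⟩ := cSpider_adj_some_some.mp hw'
    simp only [cRank, add_left_inj] at hr
    rw [Fin.ext hr]

lemma cSpider_rank_adj {u v : CSV n m} (h : (cSpider n m).Adj u v) :
    cRank u + 1 = cRank v ∨ cRank v + 1 = cRank u := by
  rcases u with _ | ⟨i, k⟩ <;> rcases v with _ | ⟨j, l⟩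
  · exact absurd h cSpider_adj_none_none
  · left; simp [cRank, cSpider_adj_none_some.mp h]
  · right; simp [cRank, cSpider_adj_some_none.mp h]
  · rcases (cSpider_adj_some_some.mp h).2 with h' | h'
    · left; simp [cRank, h']
    · right; simp [cRank, h']

lemma cSpider_connected : (cSpider n m).Connected := by
  rw [connected_iff_exists_forall_reachable]
  refine ⟨none, ?_⟩
  rintro (_ | ⟨i, k⟩)
  · rfl
  · obtain ⟨kv, hkv⟩ := k
    induction kv with
    | zero => exact (cSpider_adj_none_some.mpr rfl).reachable
    | succ p ih =>
      have hp : p < m i + 1 := Nat.lt_of_succ_lt hkv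
      refine (ih hp).trans (Adj.reachable ?_)
      exact cSpider_adj_some_some.mpr ⟨rfl, Or.inl rfl⟩

lemma cSpider_isTree : (cSpider n m).IsTree := by
  refine ⟨cSpider_connected, isAcyclic_of_rank _ cRank (fun u v h => cSpider_rank_adj h) ?_⟩
  rintro (_ | ⟨i, k⟩) u u' hu hu' h1 h1'
  · simp [cRank] at h1
  · exact cSpider_adj_rank_eq hu hu' (by omega)

lemma cSpider_neighborSet_none :
    (cSpider n m).neighborSet none =
      Set.range (fun i : Fin n => (some ⟨i, ⟨0, Nat.succ_pos _⟩⟩ : CSV n m)) := by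
  ext (_ | ⟨i, k⟩)
  · simp only [mem_neighborSet, Set.mem_range]
    constructor
    · intro h; exact absurd h cSpider_adj_none_none
    · rintro ⟨j, hj⟩; exact absurd hj (by simp)
  · simp only [Set.mem_range, mem_neighborSet, cSpider_adj_none_some]
    constructor
    · intro h
      exact ⟨i, by congr 1; exact Sigma.ext rfl (heq_of_eq (Fin.ext h.symm))⟩
    · rintro ⟨j, hj⟩
      obtain ⟨rfl, hk⟩ : j = i ∧ HEq (⟨0, Nat.succ_pos _⟩ : Fin (m j + 1)) k := by
        simpa [Sigma.mk.inj_iff] using hj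
      rw [← eq_of_heq hk]

lemma cSpider_ncard_none : ((cSpider n m).neighborSet none).ncard = n := by
  rw [cSpider_neighborSet_none, ← Nat.card_coe_set_eq]
  have hinj : Function.Injective (fun i : Fin n => (some ⟨i, ⟨0, Nat.succ_pos _⟩⟩ : CSV n m)) := by
    intro a b hab
    have h2 : a = b ∧ HEq (⟨0, Nat.succ_pos _⟩ : Fin (m a + 1)) (⟨0, Nat.succ_pos _⟩ : Fin (m b + 1)) := by
      simpa [Sigma.mk.inj_iff] using hab
    exact h2.1
  rw [Nat.card_congr (Equiv.ofInjective _ hinj).symm, Nat.card_eq_fintype_card,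
    Fintype.card_fin]

lemma cSpider_ncard_some {i : Fin n} {k : Fin (m i + 1)} :
    ((cSpider n m).neighborSet (some ⟨i, k⟩)).ncard ≤ 2 := by
  classical
  have hinj : Function.Injective
      (fun u : ((cSpider n m).neighborSet (some ⟨i, k⟩)) =>
        decide (cRank u.1 < cRank (some ⟨i, k⟩ : CSV n m))) := by
    rintro ⟨u, hu⟩ ⟨u', hu'⟩ h
    have hadju : (cSpider n m).Adj u (some ⟨i, k⟩) := Adj.symm hu
    have hadju' : (cSpider n m).Adj u' (some ⟨i, k⟩) := Adj.symm hu'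
    replace h : decide (cRank u < cRank (some ⟨i, k⟩ : CSV n m)) =
        decide (cRank u' < cRank (some ⟨i, k⟩ : CSV n m)) := h
    have h2 := decide_eq_decide.mp h
    have hu2 := cSpider_rank_adj hadju
    have hu2' := cSpider_rank_adj hadju'
    apply Subtype.ext
    show u = u'
    by_cases hc : cRank u < cRank (some ⟨i, k⟩ : CSV n m)
    · have hc' := h2.mp hc
      exact cSpider_adj_rank_eq hadju hadju' (by omega)
    · have hc' := fun hh => hc (h2.mpr hh)
      exact cSpider_adj_rank_eq hadju hadju' (by omega)
  calc ((cSpider n m).neighborSet (some ⟨i, k⟩)).ncard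
      = Nat.card ((cSpider n m).neighborSet (some ⟨i, k⟩)) := (Nat.card_coe_set_eq _).symm
    _ ≤ Nat.card Bool := Nat.card_le_card_of_injective _ hinj
    _ = 2 := by simp [Nat.card_eq_fintype_card]

lemma cSpider_isSpider (hn : 3 ≤ n) : (cSpider n m).IsTree ∧
    ∃! v : CSV n m, 3 ≤ ((cSpider n m).neighborSet v).ncard := by
  refine ⟨cSpider_isTree, none, ?_, ?_⟩
  · show 3 ≤ ((cSpider n m).neighborSet none).ncard
    rw [cSpider_ncard_none]; exact hn
  · rintro (_ | ⟨i, k⟩) hy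
    · rfl
    · exact absurd (le_trans hy cSpider_ncard_some) (by norm_num)

end SpiderAux

namespace SpiderAux
variable {V : Type*} {W : Type*}

def IsSpider' {W : Type*} (S : SimpleGraph W) : Prop :=
  S.IsTree ∧ ∃! v : W, 3 ≤ (S.neighborSet v).ncard

/-- Line graphs are functorial in isomorphisms. -/
def lineGraphIso {G : SimpleGraph V} {H : SimpleGraph W} (f : G ≃g H) :
    G.lineGraph ≃g H.lineGraph where
  toEquiv := f.mapEdgeSet
  map_rel_iff' := by
    intro e₁ e₂
    have hcoe : ∀ e : G.edgeSet, ((f.mapEdgeSet e : H.edgeSet) : Sym2 W) = Sym2.map f (e : Sym2 V) :=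
      fun e => rfl
    rw [lineGraph_adj_iff_exists, lineGraph_adj_iff_exists]
    constructor
    · rintro ⟨hne, v, hv1, hv2⟩
      refine ⟨fun hh => hne (by rw [hh]), ?_⟩
      rw [hcoe, Sym2.mem_map] at hv1 hv2
      obtain ⟨a, ha, hav⟩ := hv1
      obtain ⟨b, hb, hbv⟩ := hv2
      have : a = b := f.injective (hav.trans hbv.symm)
      exact ⟨a, ha, this ▸ hb⟩
    · rintro ⟨hne, v, hv1, hv2⟩
      refine ⟨fun hh => hne (f.mapEdgeSet.injective hh), ?_⟩
      refine ⟨f v, ?_, ?_⟩ <;> rw [hcoe, Sym2.mem_map]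
      · exact ⟨v, hv1, rfl⟩
      · exact ⟨v, hv2, rfl⟩

lemma ncard_neighborSet_iso {G : SimpleGraph V} {H : SimpleGraph W} (f : G ≃g H) (v : V) :
    (H.neighborSet (f v)).ncard = (G.neighborSet v).ncard := by
  rw [← Nat.card_coe_set_eq, ← Nat.card_coe_set_eq]
  exact Nat.card_congr (f.mapNeighborSet v).symm

lemma isSpider_map {G : SimpleGraph V} {H : SimpleGraph W} (f : G ≃g H)
    (h : IsSpider' G) : IsSpider' H := by
  obtain ⟨⟨hconn, hacyc⟩, c, hc3, hcu⟩ := h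
  refine ⟨⟨f.connected_iff.mp hconn, ?_⟩, f c, ?_, ?_⟩
  · intro v p hp
    have := hacyc ((p.map f.symm.toHom).copy rfl rfl)
    exact this (by rw [Walk.isCycle_copy]; exact hp.map f.symm.injective)
  · show 3 ≤ (H.neighborSet (f c)).ncard
    rw [ncard_neighborSet_iso f c]; exact hc3
  · intro y hy
    have hy' : 3 ≤ (H.neighborSet y).ncard := hy
    have : 3 ≤ (G.neighborSet (f.symm y)).ncard := by
      rw [← ncard_neighborSet_iso f (f.symm y)]
      simpa using hy'
    have := hcu _ this
    rw [← this]; simp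

end SpiderAux

namespace SpiderAux
variable {n : ℕ} {m : Fin n → ℕ}

lemma some_sigma_eq {i j : Fin n} {a : Fin (m i + 1)} {b : Fin (m j + 1)} :
    (some ⟨i, a⟩ : CSV n m) = some ⟨j, b⟩ ↔ i = j ∧ (a : ℕ) = (b : ℕ) := by
  constructor
  · intro h
    obtain ⟨rfl, h2⟩ := Sigma.mk.inj_iff.mp (Option.some.inj h)
    exact ⟨rfl, congrArg Fin.val (eq_of_heq h2)⟩
  · rintro ⟨rfl, h⟩
    rw [Fin.ext h]

def EMap (n : ℕ) (m : Fin n → ℕ) : (Fin n ⊕ Σ i : Fin n, Fin (m i)) → (cSpider n m).edgeSet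
  | Sum.inl i => ⟨s(none, some ⟨i, ⟨0, Nat.succ_pos _⟩⟩),
      (cSpider n m).mem_edgeSet.mpr (cSpider_adj_none_some.mpr rfl)⟩
  | Sum.inr ⟨i, k⟩ => ⟨s(some ⟨i, k.castSucc⟩, some ⟨i, k.succ⟩),
      (cSpider n m).mem_edgeSet.mpr (cSpider_adj_some_some.mpr ⟨rfl, Or.inl (by simp)⟩)⟩

lemma EMap_injective : Function.Injective (EMap n m) := by
  rintro (i | ⟨i, k⟩) (j | ⟨j, l⟩) h <;>
    rw [Subtype.ext_iff] at h <;> simp only [EMap] at h <;> rw [Sym2.eq_iff] at h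
  · rcases h with ⟨-, h⟩ | ⟨h, -⟩
    · rw [(some_sigma_eq.mp h).1]
    · exact absurd h (by simp)
  · rcases h with ⟨h, -⟩ | ⟨h, -⟩ <;> exact absurd h (by simp)
  · rcases h with ⟨h, -⟩ | ⟨-, h⟩ <;> exact absurd h (by simp)
  · rcases h with ⟨h1, h2⟩ | ⟨h1, h2⟩
    · obtain ⟨rfl, hkl⟩ := some_sigma_eq.mp h1
      simp only [Fin.coe_castSucc] at hkl
      congr 1
      exact Sigma.ext rfl (heq_of_eq (Fin.ext hkl))
    · obtain ⟨rfl, hkl1⟩ := some_sigma_eq.mp h1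
      obtain ⟨-, hkl2⟩ := some_sigma_eq.mp h2
      simp only [Fin.coe_castSucc, Fin.val_succ] at hkl1 hkl2
      omega

lemma EMap_surjective : Function.Surjective (EMap n m) := by
  rintro ⟨e, he⟩
  induction e using Sym2.ind with
  | _ a b =>
    rw [SimpleGraph.mem_edgeSet] at he
    rcases a with _ | ⟨i, k⟩ <;> rcases b with _ | ⟨j, l⟩
    · exact absurd he cSpider_adj_none_none
    · refine ⟨Sum.inl j, Subtype.ext ?_⟩
      have h0 := cSpider_adj_none_some.mp he
      simp only [EMap]
      rw [some_sigma_eq.mpr ⟨rfl, by simpa using h0.symm⟩]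
    · refine ⟨Sum.inl i, Subtype.ext ?_⟩
      have h0 := cSpider_adj_some_none.mp he
      simp only [EMap]
      rw [Sym2.eq_swap, some_sigma_eq.mpr ⟨rfl, by simpa using h0.symm⟩]
    · obtain ⟨rfl, hstep | hstep⟩ := cSpider_adj_some_some.mp he
      · have hk : (k : ℕ) < m i := by omega
        refine ⟨Sum.inr ⟨i, ⟨(k : ℕ), hk⟩⟩, Subtype.ext ?_⟩
        simp only [EMap]
        have e1 : (some ⟨i, (⟨(k : ℕ), hk⟩ : Fin (m i)).castSucc⟩ : CSV n m) = some ⟨i, k⟩ :=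
          some_sigma_eq.mpr ⟨rfl, by simp⟩
        have e2 : (some ⟨i, (⟨(k : ℕ), hk⟩ : Fin (m i)).succ⟩ : CSV n m) = some ⟨i, l⟩ :=
          some_sigma_eq.mpr ⟨rfl, by simp [hstep]⟩
        rw [e1, e2]
      · have hl : (l : ℕ) < m i := by omega
        refine ⟨Sum.inr ⟨i, ⟨(l : ℕ), hl⟩⟩, Subtype.ext ?_⟩
        simp only [EMap]
        have e1 : (some ⟨i, (⟨(l : ℕ), hl⟩ : Fin (m i)).castSucc⟩ : CSV n m) = some ⟨i, l⟩ :=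
          some_sigma_eq.mpr ⟨rfl, by simp⟩
        have e2 : (some ⟨i, (⟨(l : ℕ), hl⟩ : Fin (m i)).succ⟩ : CSV n m) = some ⟨i, k⟩ :=
          some_sigma_eq.mpr ⟨rfl, by simp [hstep]⟩
        rw [Sym2.eq_swap, e1, e2]

lemma EMap_adj {x y : Fin n ⊕ Σ i : Fin n, Fin (m i)} :
    (cSpider n m).lineGraph.Adj (EMap n m x) (EMap n m y) ↔ (genSpider n m).Adj x y := by
  rw [SimpleGraph.lineGraph_adj_iff_exists]
  have hne : (EMap n m x ≠ EMap n m y) ↔ x ≠ y := not_congr ⟨fun h => EMap_injective h, fun h => h ▸ rfl⟩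
  simp only [genSpider, SimpleGraph.fromRel_adj]
  rw [hne]
  refine and_congr_right fun hxy => ?_
  rcases x with i | ⟨i, k⟩ <;> rcases y with j | ⟨j, l⟩
  · simp only [EMap, spiderRel]
    constructor
    · intro; left; trivial
    · intro; exact ⟨none, by simp, by simp⟩
  · simp only [EMap, spiderRel]
    constructor
    · rintro ⟨v, hv1, hv2⟩
      rw [Sym2.mem_iff] at hv1 hv2
      rcases hv1 with rfl | rfl
      · rcases hv2 with h | h <;> exact absurd h (by simp)
      · rcases hv2 with h | h
        · obtain ⟨rfl, hh⟩ := some_sigma_eq.mp h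
          exact Or.inl ⟨rfl, by simpa using hh.symm⟩
        · obtain ⟨rfl, hh⟩ := some_sigma_eq.mp h
          simp at hh
    · rintro (⟨rfl, h0⟩ | h)
      · refine ⟨some ⟨i, l.castSucc⟩, ?_, ?_⟩
        · rw [Sym2.mem_iff]; right
          exact some_sigma_eq.mpr ⟨rfl, by simp [h0]⟩
        · rw [Sym2.mem_iff]; left
          exact some_sigma_eq.mpr ⟨rfl, by simp [h0]⟩
      · exact h.elim
  · simp only [EMap, spiderRel]
    constructor
    · rintro ⟨v, hv1, hv2⟩
      rw [Sym2.mem_iff] at hv1 hv2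
      rcases hv2 with rfl | rfl
      · rcases hv1 with h | h <;> exact absurd h (by simp)
      · rcases hv1 with h | h
        · obtain ⟨rfl, hh⟩ := some_sigma_eq.mp h
          exact Or.inr ⟨rfl, by simpa using hh.symm⟩
        · obtain ⟨rfl, hh⟩ := some_sigma_eq.mp h
          simp at hh
    · rintro (h | ⟨rfl, h0⟩)
      · exact h.elim
      · refine ⟨some ⟨j, k.castSucc⟩, ?_, ?_⟩
        · rw [Sym2.mem_iff]; left
          exact some_sigma_eq.mpr ⟨rfl, by simp [h0]⟩
        · rw [Sym2.mem_iff]; right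
          exact some_sigma_eq.mpr ⟨rfl, by simp [h0]⟩
  · simp only [EMap, spiderRel]
    have hxy' : ¬ (i = j ∧ (k : ℕ) = (l : ℕ)) := by
      rintro ⟨rfl, hkl⟩
      exact hxy (by rw [Fin.ext hkl])
    constructor
    · rintro ⟨v, hv1, hv2⟩
      rw [Sym2.mem_iff] at hv1 hv2
      have get : ∀ (hh : v = some ⟨i, k.castSucc⟩ ∨ v = some ⟨i, k.succ⟩)
          (hh2 : v = some ⟨j, l.castSucc⟩ ∨ v = some ⟨j, l.succ⟩), i = j ∧
          ((k:ℕ) = l ∨ (k:ℕ) = l+1 ∨ (k:ℕ)+1 = l ∨ (k:ℕ)+1 = (l:ℕ)+1) := by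
        rintro (rfl | rfl) (h | h) <;> obtain ⟨rfl, hh⟩ := some_sigma_eq.mp h <;>
          simp only [Fin.coe_castSucc, Fin.val_succ] at hh <;> exact ⟨rfl, by omega⟩
      obtain ⟨rfl, hcase⟩ := get hv1 hv2
      have hkl : (k : ℕ) ≠ (l : ℕ) := fun hh => hxy' ⟨rfl, hh⟩
      rcases hcase with h | h | h | h
      · exact absurd h hkl
      · exact Or.inr ⟨rfl, h.symm⟩
      · exact Or.inl ⟨rfl, h⟩
      · exact absurd (by omega : (k:ℕ) = l) hkl
    · rintro (⟨rfl, h⟩ | ⟨rfl, h⟩)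
      · refine ⟨some ⟨i, k.succ⟩, by rw [Sym2.mem_iff]; right; rfl, ?_⟩
        rw [Sym2.mem_iff]; left
        exact some_sigma_eq.mpr ⟨rfl, by simp only [Fin.coe_castSucc, Fin.val_succ]; omega⟩
      · refine ⟨some ⟨j, k.castSucc⟩, by rw [Sym2.mem_iff]; left; rfl, ?_⟩
        rw [Sym2.mem_iff]; right
        exact some_sigma_eq.mpr ⟨rfl, by simp only [Fin.coe_castSucc, Fin.val_succ]; omega⟩

noncomputable def genSpiderIsoLine (n : ℕ) (m : Fin n → ℕ) :
    genSpider n m ≃g (cSpider n m).lineGraph where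
  toEquiv := Equiv.ofBijective (EMap n m) ⟨EMap_injective, EMap_surjective⟩
  map_rel_iff' := EMap_adj

end SpiderAux

namespace SpiderAux
set_option linter.unusedSectionVars false
open SimpleGraph

variable {V : Type} [DecidableEq V] {S : SimpleGraph V}

lemma concat_isPath {u v w : V} {p : S.Walk u v} (hp : p.IsPath) (h : S.Adj v w)
    (hw : w ∉ p.support) : (p.concat h).IsPath := by
  rw [← Walk.isPath_reverse_iff, Walk.reverse_concat, Walk.cons_isPath_iff]
  exact ⟨hp.reverse, by simpa using hw⟩

lemma isPath_length_eq_dist (hT : S.IsTree) {a b : V} (p : S.Walk a b) (hp : p.IsPath) :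
    p.length = S.dist a b := by
  obtain ⟨q, hq⟩ := (hT.isConnected a b).exists_walk_length_eq_dist
  have hqp : q.bypass.IsPath := Walk.bypass_isPath q
  have hpq : p = q.bypass := (hT.existsUnique_path a b).unique hp hqp
  have h1 : q.bypass.length ≤ q.length := Walk.length_bypass_le q
  have h2 := SimpleGraph.dist_le p
  have h3 := congrArg Walk.length hpq
  omega

lemma not_mem_support_of_length_lt (hT : S.IsTree) {c x y : V} (p : S.Walk c y)
    (hp : p.IsPath) (h : p.length < S.dist c x) : x ∉ p.support := by
  intro hmem
  have ht : (p.takeUntil x hmem).IsPath := hp.takeUntil hmem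
  have hlen := isPath_length_eq_dist hT _ ht
  have := Walk.length_takeUntil_le p hmem
  omega

lemma adj_dist_step (hT : S.IsTree) {c u v : V} (h : S.Adj u v) :
    S.dist c u + 1 = S.dist c v ∨ S.dist c v + 1 = S.dist c u := by
  have hconn := hT.isConnected
  have huv : S.dist u v = 1 := dist_eq_one_iff_adj.mpr h
  have hvu : S.dist v u = 1 := dist_eq_one_iff_adj.mpr h.symm
  have t1 : S.dist c v ≤ S.dist c u + 1 := by
    have := hconn.dist_triangle (u := c) (v := u) (w := v); omega
  have t2 : S.dist c u ≤ S.dist c v + 1 := by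
    have := hconn.dist_triangle (u := c) (v := v) (w := u); omega
  have hne : S.dist c u ≠ S.dist c v := by
    intro heq
    set P := (hT.existsUnique_path c v).choose with hP
    have hPp : P.IsPath := (hT.existsUnique_path c v).choose_spec.1
    have hPlen : P.length = S.dist c v := isPath_length_eq_dist hT P hPp
    by_cases hmem : u ∈ P.support
    · have ht : (P.takeUntil u hmem).IsPath := hPp.takeUntil hmem
      have hlent : (P.takeUntil u hmem).length = S.dist c u := isPath_length_eq_dist hT _ ht
      have hspec := P.take_spec hmem
      have hlen2 : (P.takeUntil u hmem).length + (P.dropUntil u hmem).length = P.length := by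
        rw [← Walk.length_append, hspec]
      have hdrop : (P.dropUntil u hmem).length = 0 := by omega
      exact h.ne (Walk.eq_of_length_eq_zero hdrop)
    · have hQ : (P.concat h.symm).IsPath := concat_isPath hPp h.symm hmem
      have := isPath_length_eq_dist hT _ hQ
      rw [Walk.length_concat] at this
      omega
  omega

lemma parent_unique (hT : S.IsTree) {c v u u' : V} (hu : S.Adj u v) (hu' : S.Adj u' v)
    (hd : S.dist c u + 1 = S.dist c v) (hd' : S.dist c u' + 1 = S.dist c v) : u = u' := by
  have mk : ∀ (w : V) (hw : S.Adj w v) (hdw : S.dist c w + 1 = S.dist c v),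
      ∃ Q : S.Walk c v, Q.IsPath ∧ Q.reverse.getVert 1 = w := by
    intro w hw hdw
    set P := (hT.existsUnique_path c w).choose with hP
    have hPp : P.IsPath := (hT.existsUnique_path c w).choose_spec.1
    have hPlen : P.length = S.dist c w := isPath_length_eq_dist hT P hPp
    have hvP : v ∉ P.support := not_mem_support_of_length_lt hT P hPp (by omega)
    refine ⟨P.concat hw, concat_isPath hPp hw hvP, ?_⟩
    rw [Walk.reverse_concat, Walk.getVert_cons_succ, Walk.getVert_zero]
  obtain ⟨Q, hQ, hQw⟩ := mk u hu hd
  obtain ⟨Q', hQ', hQw'⟩ := mk u' hu' hd'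
  have : Q = Q' := (hT.existsUnique_path c v).unique hQ hQ'
  rw [← hQw, ← hQw', this]

lemma exists_parent (hT : S.IsTree) {c v : V} (h : v ≠ c) :
    ∃ u, S.Adj u v ∧ S.dist c u + 1 = S.dist c v := by
  have hconn := hT.isConnected
  have hd : 0 < S.dist c v := hconn.pos_dist_of_ne (Ne.symm h)
  obtain ⟨w, hw⟩ := hconn.exists_walk_length_eq_dist c v
  cases hrev : w.reverse with
  | nil =>
    exfalso
    have hh : w.length = 0 := by simpa using congrArg Walk.length hrev
    omega
  | cons hadj r =>
    rename_i u
    have hru : S.dist c u ≤ r.length := by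
      have := SimpleGraph.dist_le r.reverse
      rwa [Walk.length_reverse] at this
    have hrlen : r.length + 1 = S.dist c v := by
      have := congrArg Walk.length hrev
      rw [Walk.length_reverse] at this
      rw [← hw]
      simpa using this.symm
    have huv : S.dist u v = 1 := dist_eq_one_iff_adj.mpr hadj.symm
    have t1 : S.dist c v ≤ S.dist c u + 1 := by
      have := hconn.dist_triangle (u := c) (v := u) (w := v); omega
    exact ⟨u, hadj.symm, by omega⟩

/-- the first vertex on the unique path from the center to `v` -/
noncomputable def leg (hT : S.IsTree) (c v : V) : V :=
  (hT.existsUnique_path c v).choose.getVert 1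

lemma thePath_isPath (hT : S.IsTree) (c v : V) :
    (hT.existsUnique_path c v).choose.IsPath := (hT.existsUnique_path c v).choose_spec.1

lemma thePath_length (hT : S.IsTree) (c v : V) :
    (hT.existsUnique_path c v).choose.length = S.dist c v :=
  isPath_length_eq_dist hT _ (thePath_isPath hT c v)

lemma leg_self (hT : S.IsTree) {c v : V} (h : S.dist c v = 1) : leg hT c v = v := by
  rw [leg]
  have hl := thePath_length hT c v
  rw [h] at hl
  rw [← hl, Walk.getVert_length]

lemma adj_leg (hT : S.IsTree) {c v : V} (h : 0 < S.dist c v) : S.Adj c (leg hT c v) := by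
  have hl := thePath_length hT c v
  have := Walk.adj_getVert_succ (hT.existsUnique_path c v).choose (i := 0) (by omega)
  rwa [Walk.getVert_zero] at this

lemma dist_leg (hT : S.IsTree) {c v : V} (h : 0 < S.dist c v) : S.dist c (leg hT c v) = 1 :=
  dist_eq_one_iff_adj.mpr (adj_leg hT h)

lemma getVert_concat_of_le {u v w : V} (p : S.Walk u v) (h : S.Adj v w) {i : ℕ}
    (hi : i ≤ p.length) : (p.concat h).getVert i = p.getVert i := by
  rw [Walk.concat_eq_append, Walk.getVert_append]
  split_ifs with hlt
  · rfl
  · have : i = p.length := le_antisymm hi (not_lt.mp hlt)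
    subst this
    simp

lemma leg_parent (hT : S.IsTree) {c v u : V} (hu : S.Adj u v)
    (hd : S.dist c u + 1 = S.dist c v) (h2 : 2 ≤ S.dist c v) : leg hT c v = leg hT c u := by
  set P := (hT.existsUnique_path c u).choose with hP
  have hPp : P.IsPath := thePath_isPath hT c u
  have hPlen : P.length = S.dist c u := thePath_length hT c u
  have hvP : v ∉ P.support := not_mem_support_of_length_lt hT P hPp (by omega)
  have hQ : (P.concat hu).IsPath := concat_isPath hPp hu hvP
  have hQeq : P.concat hu = (hT.existsUnique_path c v).choose :=
    (hT.existsUnique_path c v).choose_spec.2 _ hQ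
  rw [leg, leg, ← hQeq, getVert_concat_of_le _ _ (by omega)]

end SpiderAux

namespace SpiderAux
set_option linter.unusedSectionVars false
open SimpleGraph

section Classify
variable {V : Type} [Fintype V] [DecidableEq V] {S : SimpleGraph V}

lemma child_unique (hT : S.IsTree) {c : V}
    (hcu : ∀ y : V, 3 ≤ (S.neighborSet y).ncard → y = c) {p u u' : V}
    (hp : p ≠ c) (hu : S.Adj p u) (hu' : S.Adj p u')
    (hd : S.dist c u = S.dist c p + 1) (hd' : S.dist c u' = S.dist c p + 1) : u = u' := by
  by_contra hne
  obtain ⟨q, hq, hqd⟩ := exists_parent hT hp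
  have hqu : q ≠ u := by intro h; rw [h] at hqd; omega
  have hqu' : q ≠ u' := by intro h; rw [h] at hqd; omega
  have hsub : ({q, u, u'} : Set V) ⊆ S.neighborSet p := by
    rintro x (rfl | rfl | rfl)
    · exact hq.symm
    · exact hu
    · exact hu'
  have h3 : ({q, u, u'} : Set V).ncard = 3 :=
    Set.ncard_eq_three.mpr ⟨q, u, u', hqu, hqu', hne, rfl⟩
  have : 3 ≤ (S.neighborSet p).ncard := by
    rw [← h3]
    exact Set.ncard_le_ncard hsub (Set.toFinite _)
  exact hp (hcu p this)

lemma leg_dist_inj (hT : S.IsTree) {c : V}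
    (hcu : ∀ y : V, 3 ≤ (S.neighborSet y).ncard → y = c) :
    ∀ (k : ℕ) (u v : V), u ≠ c → v ≠ c → leg hT c u = leg hT c v →
      S.dist c u = S.dist c v → S.dist c u = k → u = v := by
  intro k
  induction k with
  | zero =>
    intro u v hu hv _ _ hk
    exact absurd hk (by have := hT.isConnected.pos_dist_of_ne (Ne.symm hu); omega)
  | succ k ih =>
    intro u v hu hv hleg hdist hk
    rcases Nat.eq_zero_or_pos k with rfl | hkpos
    · -- dist = 1
      have h1u : S.dist c u = 1 := hk
      have h1v : S.dist c v = 1 := by omega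
      rw [← leg_self hT h1u, ← leg_self hT h1v]
      exact hleg
    · obtain ⟨pu, hpu, hpud⟩ := exists_parent hT hu
      obtain ⟨pv, hpv, hpvd⟩ := exists_parent hT hv
      have hpuc : pu ≠ c := by
        intro h
        rw [h] at hpud
        rw [SimpleGraph.dist_self] at hpud
        omega
      have hpvc : pv ≠ c := by
        intro h
        rw [h] at hpvd
        rw [SimpleGraph.dist_self] at hpvd
        omega
      have hlu : leg hT c u = leg hT c pu := leg_parent hT hpu hpud (by omega)
      have hlv : leg hT c v = leg hT c pv := leg_parent hT hpv hpvd (by omega)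
      have hpp : pu = pv := ih pu pv hpuc hpvc (by rw [← hlu, ← hlv, hleg]) (by omega) (by omega)
      rw [← hpp] at hpv
      exact child_unique hT hcu hpuc hpu hpv (by omega) (by omega)

lemma exists_at_dist (hT : S.IsTree) {c : V} (k : ℕ) :
    ∀ (j : ℕ) (v : V), v ≠ c → 1 ≤ k → k ≤ S.dist c v → S.dist c v = j →
      ∃ u, u ≠ c ∧ leg hT c u = leg hT c v ∧ S.dist c u = k := by
  intro j
  induction j with
  | zero =>
    intro v hv hk1 hkd hj
    omega
  | succ j ih =>
    intro v hv hk1 hkd hj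
    rcases eq_or_lt_of_le hkd with heq | hlt
    · exact ⟨v, hv, rfl, heq.symm⟩
    · obtain ⟨p, hp, hpd⟩ := exists_parent hT hv
      have hpc : p ≠ c := by
        intro h
        rw [h, SimpleGraph.dist_self] at hpd
        omega
      have hlp : leg hT c v = leg hT c p := leg_parent hT hp hpd (by omega)
      obtain ⟨u, hu1, hu2, hu3⟩ := ih p hpc hk1 (by omega) (by omega)
      exact ⟨u, hu1, by rw [hu2, hlp], hu3⟩

lemma spider_iso_cSpider {S : SimpleGraph V}
    (hS : S.IsTree ∧ ∃! v : V, 3 ≤ (S.neighborSet v).ncard) :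
    ∃ (n : ℕ) (m : Fin n → ℕ), 3 ≤ n ∧ Nonempty (S ≃g cSpider n m) := by
  classical
  obtain ⟨hT, c, hc3, hcu⟩ := hS
  have hcu : ∀ y : V, 3 ≤ (S.neighborSet y).ncard → y = c := hcu
  have hconn := hT.isConnected
  haveI : Fintype ↥(S.neighborSet c) := Fintype.ofFinite _
  set n := Fintype.card ↥(S.neighborSet c) with hn_def
  set enum := Fintype.equivFin ↥(S.neighborSet c) with henum
  have hn : 3 ≤ n := by
    have : (S.neighborSet c).ncard = n := by
      rw [← Nat.card_coe_set_eq, Nat.card_eq_fintype_card]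
    omega
  -- max leg lengths
  set Mb : V → ℕ := fun b =>
    Finset.sup (Finset.univ.filter (fun v => v ≠ c ∧ leg hT c v = b)) (S.dist c) with hMb
  have hle : ∀ v : V, v ≠ c → S.dist c v ≤ Mb (leg hT c v) := by
    intro v hv
    exact Finset.le_sup (by simp [hv])
  have hdpos : ∀ v : V, v ≠ c → 0 < S.dist c v :=
    fun v hv => hconn.pos_dist_of_ne (Ne.symm hv)
  have hlegb : ∀ b, b ∈ S.neighborSet c → leg hT c b = b ∧ b ≠ c := by
    intro b hb
    have hadj : S.Adj c b := hb
    have hd1 : S.dist c b = 1 := dist_eq_one_iff_adj.mpr hadj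
    exact ⟨leg_self hT hd1, hadj.ne'⟩
  have hM1 : ∀ b ∈ S.neighborSet c, 1 ≤ Mb b := by
    intro b hb
    obtain ⟨hlb, hbc⟩ := hlegb b hb
    have : S.dist c b ≤ Mb b := by
      have := hle b hbc; rwa [hlb] at this
    have hd1 : S.dist c b = 1 := dist_eq_one_iff_adj.mpr hb
    omega
  have hach : ∀ b ∈ S.neighborSet c, ∃ v, v ≠ c ∧ leg hT c v = b ∧ S.dist c v = Mb b := by
    intro b hb
    obtain ⟨hlb, hbc⟩ := hlegb b hb
    have hne : (Finset.univ.filter (fun v => v ≠ c ∧ leg hT c v = b)).Nonempty :=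
      ⟨b, by simp [hbc, hlb]⟩
    obtain ⟨v, hv, hveq⟩ := Finset.exists_mem_eq_sup _ hne (S.dist c)
    simp only [Finset.mem_filter, Finset.mem_univ, true_and] at hv
    exact ⟨v, hv.1, hv.2, hveq.symm⟩
  set m : Fin n → ℕ := fun i => Mb ((enum.symm i : ↥(S.neighborSet c)) : V) - 1 with hm
  have hmemF : ∀ v : V, v ≠ c → leg hT c v ∈ S.neighborSet c :=
    fun v hv => adj_leg hT (hdpos v hv)
  have hboundF : ∀ (v : V) (h : v ≠ c),
      S.dist c v - 1 < m (enum ⟨leg hT c v, hmemF v h⟩) + 1 := by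
    intro v h
    have h1 := hle v h
    have h2 := hdpos v h
    have h3 := hM1 _ (hmemF v h)
    simp only [hm, Equiv.symm_apply_apply]
    omega
  set F : V → CSV n m := fun v =>
    if h : v = c then none
    else some ⟨enum ⟨leg hT c v, hmemF v h⟩, ⟨S.dist c v - 1, hboundF v h⟩⟩ with hF
  have hFc : F c = none := by simp [hF]
  have hFv : ∀ (v : V) (h : v ≠ c),
      F v = some ⟨enum ⟨leg hT c v, hmemF v h⟩, ⟨S.dist c v - 1, hboundF v h⟩⟩ := by
    intro v h; simp [hF, h]
  have hinj : Function.Injective F := by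
    intro u v h
    by_cases hu : u = c <;> by_cases hv : v = c
    · rw [hu, hv]
    · exfalso
      rw [hu, hFc, hFv v hv] at h
      exact Option.some_ne_none _ h.symm
    · exfalso
      rw [hv, hFc, hFv u hu] at h
      exact Option.some_ne_none _ h
    · rw [hFv u hu, hFv v hv] at h
      have hsig := Option.some.inj h
      have hfst := congrArg Sigma.fst hsig
      simp only at hfst
      have hleg : leg hT c u = leg hT c v :=
        congrArg Subtype.val (enum.injective hfst)
      have hval : S.dist c u - 1 = S.dist c v - 1 :=
        congrArg (fun x : Σ i : Fin n, Fin (m i + 1) => (x.2 : ℕ)) hsig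
      have hdu := hdpos u hu
      have hdv := hdpos v hv
      exact leg_dist_inj hT hcu (S.dist c u) u v hu hv hleg (by omega) rfl
  have hsurj : Function.Surjective F := by
    rintro (_ | ⟨i, k⟩)
    · exact ⟨c, hFc⟩
    · set b : V := ((enum.symm i : ↥(S.neighborSet c)) : V) with hb
      have hbmem : b ∈ S.neighborSet c := (enum.symm i).2
      have hkb : (k : ℕ) + 1 ≤ Mb b := by
        have hk2 := k.2
        have h1 := hM1 b hbmem
        have hmeq : m i = Mb b - 1 := by simp only [hm, hb]
        omega
      obtain ⟨v0, hv0c, hv0leg, hv0d⟩ := hach b hbmem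
      obtain ⟨u, huc, huleg, hud⟩ :=
        exists_at_dist hT ((k : ℕ) + 1) (S.dist c v0) v0 hv0c (by omega) (by omega) rfl
      refine ⟨u, ?_⟩
      rw [hFv u huc]
      have hlegu : leg hT c u = b := by rw [huleg, hv0leg]
      have hienum : enum ⟨leg hT c u, hmemF u huc⟩ = i := by
        have : (⟨leg hT c u, hmemF u huc⟩ : ↥(S.neighborSet c)) = enum.symm i :=
          Subtype.ext hlegu
        rw [this, Equiv.apply_symm_apply]
      exact some_sigma_eq.mpr ⟨hienum, by simp [hud]⟩
  refine ⟨n, m, hn, ⟨{ toEquiv := Equiv.ofBijective F ⟨hinj, hsurj⟩, map_rel_iff' := ?_ }⟩⟩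
  intro u v
  show (cSpider n m).Adj (F u) (F v) ↔ S.Adj u v
  by_cases hu : u = c <;> by_cases hv : v = c
  · rw [hu, hv, hFc]
    constructor
    · intro h; exact absurd h cSpider_adj_none_none
    · intro h; exact absurd rfl h.ne
  · rw [hu, hFc, hFv v hv, cSpider_adj_none_some]
    have hdv := hdpos v hv
    constructor
    · intro h
      have : S.dist c v = 1 := by simp at h; omega
      exact dist_eq_one_iff_adj.mp this
    · intro h
      have : S.dist c v = 1 := dist_eq_one_iff_adj.mpr h
      simp [this]
  · rw [hv, hFc, hFv u hu, cSpider_adj_some_none]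
    have hdu := hdpos u hu
    rw [adj_comm]
    constructor
    · intro h
      have : S.dist c u = 1 := by simp at h; omega
      exact dist_eq_one_iff_adj.mp this
    · intro h
      have : S.dist c u = 1 := dist_eq_one_iff_adj.mpr h
      simp [this]
  · rw [hFv u hu, hFv v hv, cSpider_adj_some_some]
    have hdu := hdpos u hu
    have hdv := hdpos v hv
    have hiff : enum ⟨leg hT c u, hmemF u hu⟩ = enum ⟨leg hT c v, hmemF v hv⟩ ↔
        leg hT c u = leg hT c v := by
      constructor
      · intro h; exact congrArg Subtype.val (enum.injective h)
      · intro h; exact congrArg enum (Subtype.ext h)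
    rw [hiff]
    constructor
    · rintro ⟨hleg, hstep | hstep⟩
      · -- dist u + 1 = dist v
        simp only at hstep
        have hd : S.dist c u + 1 = S.dist c v := by omega
        obtain ⟨p, hp, hpd⟩ := exists_parent hT hv
        have hpc : p ≠ c := by
          intro h; rw [h, SimpleGraph.dist_self] at hpd; omega
        have hlp : leg hT c v = leg hT c p := leg_parent hT hp hpd (by omega)
        have hup : u = p := leg_dist_inj hT hcu (S.dist c u) u p hu hpc
          (by rw [hleg, hlp]) (by omega) rfl
        rw [hup]; exact hp
      · simp only at hstep
        have hd : S.dist c v + 1 = S.dist c u := by omega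
        obtain ⟨p, hp, hpd⟩ := exists_parent hT hu
        have hpc : p ≠ c := by
          intro h; rw [h, SimpleGraph.dist_self] at hpd; omega
        have hlp : leg hT c u = leg hT c p := leg_parent hT hp hpd (by omega)
        have hvp : v = p := leg_dist_inj hT hcu (S.dist c v) v p hv hpc
          (by rw [← hleg, hlp]) (by omega) rfl
        rw [hvp]; exact hp.symm
    · intro hadj
      rcases adj_dist_step hT (c := c) hadj with hd | hd
      · have hleg : leg hT c v = leg hT c u := leg_parent hT hadj hd (by omega)
        exact ⟨hleg.symm, Or.inl (by simp; omega)⟩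
      · have hleg : leg hT c u = leg hT c v := leg_parent hT hadj.symm hd (by omega)
        exact ⟨hleg, Or.inr (by simp; omega)⟩

end Classify
end SpiderAux



/-- A graph `G` is a generalized spider with body of size `n ≥ 3` if and only if `G` is
isomorphic to the line graph of some spider. -/
theorem isGenSpider_iff_lineGraph_spider {V : Type} [Fintype V] (G : SimpleGraph V) :
    (∃ n : ℕ, 3 ≤ n ∧ IsGenSpider G n) ↔
    ∃ (w : ℕ) (S : SimpleGraph (Fin w)), IsSpider S ∧ Nonempty (G ≃g S.lineGraph) := by
  constructor
  · rintro ⟨n, hn, m, ⟨f⟩⟩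
    set T := SpiderAux.cSpider n m with hT
    set e := Fintype.equivFin (SpiderAux.CSV n m) with he
    set S := T.comap e.symm.toEmbedding with hS
    have isoST : S ≃g T := SimpleGraph.Iso.comap e.symm T
    refine ⟨Fintype.card (SpiderAux.CSV n m), S, ?_, ⟨?_⟩⟩
    · have h1 : SpiderAux.IsSpider' T := SpiderAux.cSpider_isSpider hn
      exact SpiderAux.isSpider_map isoST.symm h1
    · exact f.trans ((SpiderAux.genSpiderIsoLine n m).trans
        (SpiderAux.lineGraphIso isoST.symm))
  · rintro ⟨w, S, hS, ⟨f⟩⟩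
    obtain ⟨n, m, hn, ⟨g⟩⟩ := SpiderAux.spider_iso_cSpider ⟨hS.1, hS.2⟩
    exact ⟨n, hn, m, ⟨f.trans ((SpiderAux.lineGraphIso g).trans
      (SpiderAux.genSpiderIsoLine n m).symm)⟩⟩
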